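/- Let k be an integer with 0 ≤ k ≤ m-1, and define a = (γ^(2m+3k+2) + γ^(m+6k+4) + 1)/(3γ^(m+3k+2)), b = (γ^(2m) + γ^(m+6k+4) + γ^(3k+2))/(3γ^(m+3k+2)), c = (γ^(6k+4) + γ^(3k+2) + 1)/(3γ^(3k+2)) in F_q, and let g(x) = a·x^(2m+1) + b·x^(m+1) + c·x. Then for every integer i with 0 ≤ i ≤ m-1 one has g(γ^(3(i+k)+2)) = γ^(3i). -/

import Mathlib

theorem stmt7 (q m : ℕ) (F : Type*) [Field F] [Fintype F]
    (hq : Fintype.card F = q) (hodd : Odd q) (hq3 : q % 3 = 1)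
    (hm : m = (q - 1) / 3)
    (γ : Fˣ) (hγ : ∀ x : Fˣ, x ∈ Subgroup.zpowers γ)
    (k : ℕ) (hk : k ≤ m - 1)
    (a b c : F)
    (ha : a = ((γ : F)^(2*m+3*k+2) + (γ : F)^(m+6*k+4) + 1) / (3 * (γ : F)^(m+3*k+2)))
    (hb : b = ((γ : F)^(2*m) + (γ : F)^(m+6*k+4) + (γ : F)^(3*k+2)) / (3 * (γ : F)^(m+3*k+2)))
    (hc : c = ((γ : F)^(6*k+4) + (γ : F)^(3*k+2) + 1) / (3 * (γ : F)^(3*k+2)))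
    (g : F → F)
    (hg : ∀ x : F, g x = a * x^(2*m+1) + b * x^(m+1) + c * x) :
    ∀ i : ℕ, i ≤ m - 1 → g ((γ : F)^(3*(i+k)+2)) = (γ : F)^(3*i) := by
  intro i _
  have hq2 : 2 ≤ q := hq ▸ Fintype.one_lt_card
  have h3m : 3 * m = q - 1 := by omega
  have hm1 : 1 ≤ m := by omega
  set u : F := (γ : F) with hu_def
  have hu : u ≠ 0 := Units.ne_zero γ
  have hupow : u ^ (3 * m) = 1 := by
    rw [h3m, ← hq]; exact FiniteField.pow_card_sub_one_eq_one u hu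
  have horder : orderOf γ = q - 1 := by
    classical
    rw [orderOf_eq_card_of_forall_mem_zpowers hγ, Nat.card_eq_fintype_card, Fintype.card_units, hq]
  have hwne : u ^ m ≠ 1 := by
    intro h
    have h1 : γ ^ m = 1 := by
      ext
      push_cast
      exact h
    have h2 := orderOf_dvd_of_pow_eq_one h1
    rw [horder] at h2
    have := Nat.le_of_dvd hm1 h2
    omega
  have hw3 : u ^ (3 * m) = 1 := hupow
  have hwsum : u ^ (2 * m) + u ^ m + 1 = 0 := by
    have h0 : (u ^ m - 1) * (u ^ (2 * m) + u ^ m + 1) = 0 := by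
      linear_combination hw3
    rcases mul_eq_zero.mp h0 with h | h
    · exact absurd (by linear_combination h) hwne
    · exact h
  have h3 : (3 : F) ≠ 0 := by
    intro h
    apply hwne
    have hcube : (u ^ m - 1) ^ 3 = 0 := by
      linear_combination hw3 + (u ^ m - u ^ (2 * m)) * h
    have := pow_eq_zero_iff (n := 3) (by norm_num) |>.mp hcube
    linear_combination this
  -- reduce the powers of x
  have h1 : (u ^ (3 * (i + k) + 2)) ^ (2 * m + 1)
      = u ^ m * u ^ (3 * (i + k) + 2) := by
    rw [← pow_mul, ← pow_add]
    have he : (3 * (i + k) + 2) * (2 * m + 1) = 3 * m * (2 * (i + k) + 1) + (m + (3 * (i + k) + 2)) := by ring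
    rw [he, pow_add, pow_mul, hupow, one_pow, one_mul]
  have h2 : (u ^ (3 * (i + k) + 2)) ^ (m + 1)
      = u ^ (2 * m) * u ^ (3 * (i + k) + 2) := by
    rw [← pow_mul, ← pow_add]
    have he : (3 * (i + k) + 2) * (m + 1) = 3 * m * (i + k) + (2 * m + (3 * (i + k) + 2)) := by ring
    rw [he, pow_add, pow_mul, hupow, one_pow, one_mul]
  have key : (a * u ^ m + b * u ^ (2 * m) + c) * u ^ (3 * k + 2) = 1 := by
    subst ha hb hc
    field_simp
    linear_combination ((u ^ (3 * k + 2)) ^ 2 + (u ^ (3 * k + 2)) ^ 3) * hwsum +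
      ((u ^ (3 * k + 2)) ^ 2 + (u ^ (3 * k + 2)) ^ 3 + u ^ m * u ^ (3 * k + 2)) * hw3
  rw [hg, h1, h2]
  calc a * (u ^ m * u ^ (3 * (i + k) + 2)) + b * (u ^ (2 * m) * u ^ (3 * (i + k) + 2))
        + c * u ^ (3 * (i + k) + 2)
      = ((a * u ^ m + b * u ^ (2 * m) + c) * u ^ (3 * k + 2)) * u ^ (3 * i) := by
        rw [show 3 * (i + k) + 2 = (3 * k + 2) + 3 * i by ring, pow_add]; ring
    _ = u ^ (3 * i) := by rw [key, one_mul]
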